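/- arXiv:2509.14898 — 2 statements merged into one kernel-verified Lean document; each statement's English description precedes it below -/
import Mathlib

section
/- Let k ≥ 1 be an integer and let X, Y be strings such that X is a prefix of Y and |Y| ≤ (5/2)·|X|. Assume there is a primitive string Q_X with hd(Q_X^*, X) ≤ k and |Q_X| ≤ |X|/(128k), and a primitive string Q_Y with hd(Q_Y^*, Y) ≤ k and |Q_Y| ≤ |Y|/(128k). Then Q_X = Q_Y. -/
variable {α : Type*}

/-- Hamming distance: the number of positions at which two (equal-length) strings differ. -/
def hamDist [DecidableEq α] (S T : List α) : ℕ :=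
  ((S.zip T).filter fun c => decide (c.1 ≠ c.2)).length

/-- 1-based substring `T[i..j]` (inclusive). -/
def substr (T : List α) (i j : ℕ) : List α := (T.drop (i - 1)).take (j - i + 1)

/-- `Q^m`: the concatenation of `m` copies of `Q`. -/
def listPow (Q : List α) (m : ℕ) : List α := (List.replicate m Q).flatten

/-- `Q^∞[a..b]`: the segment from position `a` through `b` (1-based) of the infinite
periodic string `Q^∞` with `Q^∞[i] = Q[((i−1) mod |Q|) + 1]`. -/
def infSeg (Q : List α) (a b : ℕ) : List α := substr (listPow Q b) a b

/-- A nonempty string is primitive if it is not a power of a strictly shorter string,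
i.e. it equals `R^m` only for `m = 1`. -/
def PrimitiveStr (Q : List α) : Prop :=
  Q ≠ [] ∧ ∀ (R : List α) (m : ℕ), Q = listPow R m → m = 1

/-- The forward cyclic rotation `rot(S) = S[m]·S[1..m−1]`. -/
def rot (S : List α) : List α := S.rotate (S.length - 1)

/-- `p` is a `k`-mismatch period of `T`: `1 ≤ p ≤ |T|` and
`hd(T[1..n−p+1], T[p..n]) ≤ k`. -/
def IsMismatchPeriod [DecidableEq α] (k p : ℕ) (T : List α) : Prop :=
  1 ≤ p ∧ p ≤ T.length ∧
    hamDist (substr T 1 (T.length - p + 1)) (substr T p T.length) ≤ k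


theorem fw (p q n : ℕ) (h : ℕ → α) (hp : 0 < p) (hq : 0 < q) (hn : p + q ≤ n)
    (Hp : ∀ i, i + p < n → h i = h (i + p)) (Hq : ∀ i, i + q < n → h i = h (i + q)) :
    ∀ i, i + Nat.gcd p q < n → h i = h (i + Nat.gcd p q) := by
  rcases lt_trichotomy p q with hlt | heq | hgt
  · have hq' : 0 < q - p := by omega
    have Hp' : ∀ i, i + p < n - p → h i = h (i + p) := fun i hi => Hp i (by omega)
    have Hq' : ∀ i, i + (q - p) < n - p → h i = h (i + (q - p)) := by
      intro i hi
      have e1 : h i = h (i + q) := Hq i (by omega)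
      have e2 : h (i + (q - p)) = h (i + (q - p) + p) := Hp (i + (q - p)) (by omega)
      have e3 : i + (q - p) + p = i + q := by omega
      rw [e1, e2, e3]
    have IH := fw p (q - p) (n - p) h hp hq' (by omega) Hp' Hq'
    have hg : Nat.gcd p (q - p) = Nat.gcd p q := by
      have := Nat.gcd_sub_self_right (m := p) (n := q) (by omega)
      omega
    set d := Nat.gcd p q with hd
    have hdpos : 0 < d := Nat.gcd_pos_of_pos_left _ hp
    have hdle : d ≤ q - p := by
      refine Nat.le_of_dvd hq' ?_
      rw [← hg]; exact Nat.gcd_dvd_right _ _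
    intro i hi
    by_cases hc : i + d < n - p
    · have := IH i (by rw [hg]; omega)
      rw [hg] at this; exact this
    · have hip : p ≤ i := by omega
      have e1 : h (i - p) = h (i - p + p) := Hp (i - p) (by omega)
      have e2 : h (i + d - p) = h (i + d - p + p) := Hp (i + d - p) (by omega)
      have e3 := IH (i - p) (by rw [hg]; omega)
      rw [hg] at e3
      have e4 : i - p + p = i := by omega
      have e5 : i + d - p + p = i + d := by omega
      have e6 : i - p + d = i + d - p := by omega
      rw [e4] at e1; rw [e5] at e2; rw [e6] at e3
      rw [← e1, e3, e2]
  · subst heq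
    simpa [Nat.gcd_self] using Hp
  · have hp' : 0 < p - q := by omega
    have Hq'' : ∀ i, i + q < n - q → h i = h (i + q) := fun i hi => Hq i (by omega)
    have Hp'' : ∀ i, i + (p - q) < n - q → h i = h (i + (p - q)) := by
      intro i hi
      have e1 : h i = h (i + p) := Hp i (by omega)
      have e2 : h (i + (p - q)) = h (i + (p - q) + q) := Hq (i + (p - q)) (by omega)
      have e3 : i + (p - q) + q = i + p := by omega
      rw [e1, e2, e3]
    have IH := fw (p - q) q (n - q) h hp' hq (by omega) Hp'' Hq''
    have hg : Nat.gcd (p - q) q = Nat.gcd p q := by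
      have := Nat.gcd_sub_self_left (m := q) (n := p) (by omega)
      omega
    set d := Nat.gcd p q with hd
    have hdpos : 0 < d := Nat.gcd_pos_of_pos_left _ hp
    have hdle : d ≤ p - q := by
      refine Nat.le_of_dvd hp' ?_
      rw [← hg]; exact Nat.gcd_dvd_left _ _
    intro i hi
    by_cases hc : i + d < n - q
    · have := IH i (by rw [hg]; omega)
      rw [hg] at this; exact this
    · have hiq : q ≤ i := by omega
      have e1 : h (i - q) = h (i - q + q) := Hq (i - q) (by omega)
      have e2 : h (i + d - q) = h (i + d - q + q) := Hq (i + d - q) (by omega)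
      have e3 := IH (i - q) (by rw [hg]; omega)
      rw [hg] at e3
      have e4 : i - q + q = i := by omega
      have e5 : i + d - q + q = i + d := by omega
      have e6 : i - q + d = i + d - q := by omega
      rw [e4] at e1; rw [e5] at e2; rw [e6] at e3
      rw [← e1, e3, e2]
termination_by p + q


theorem listPow_length (Q : List α) (m : ℕ) : (listPow Q m).length = m * Q.length := by
  induction m with
  | zero => simp [listPow]
  | succ n ih =>
    simp [listPow, List.replicate_succ, List.flatten_cons, Nat.succ_mul] at *
    omega

theorem listPow_succ (Q : List α) (m : ℕ) : listPow Q (m + 1) = Q ++ listPow Q m := by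
  simp [listPow, List.replicate_succ, List.flatten_cons]

theorem listPow_getD (Q : List α) (hQ : Q ≠ []) (d₀ : α) (m i : ℕ) (hi : i < m * Q.length) :
    (listPow Q m).getD i d₀ = Q.getD (i % Q.length) d₀ := by
  induction m generalizing i with
  | zero => omega
  | succ n ih =>
    rw [listPow_succ]
    by_cases hc : i < Q.length
    · rw [List.getD_append _ _ _ _ hc, Nat.mod_eq_of_lt hc]
    · push_neg at hc
      have hlen : 0 < Q.length := List.length_pos_iff.mpr hQ
      have hmul : (n+1) * Q.length = n * Q.length + Q.length := by ring
      rw [List.getD_append_right _ _ _ _ hc, ih (i - Q.length) (by omega)]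
      congr 1
      conv_rhs => rw [show i = (i - Q.length) + Q.length by omega]
      rw [Nat.add_mod_right]

theorem infSeg_one (Q : List α) (hQ : Q ≠ []) (n : ℕ) : infSeg Q 1 n = (listPow Q n).take n := by
  cases n with
  | zero => simp [infSeg, substr, listPow]
  | succ m => simp [infSeg, substr]

theorem infSeg_length (Q : List α) (hQ : Q ≠ []) (n : ℕ) : (infSeg Q 1 n).length = n := by
  have hlen : 0 < Q.length := List.length_pos_iff.mpr hQ
  rw [infSeg_one Q hQ, List.length_take, listPow_length]
  exact min_eq_left (Nat.le_mul_of_pos_right n hlen)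

theorem infSeg_getD (Q : List α) (hQ : Q ≠ []) (d₀ : α) (n i : ℕ) (hi : i < n) :
    (infSeg Q 1 n).getD i d₀ = Q.getD (i % Q.length) d₀ := by
  have hlen : 0 < Q.length := List.length_pos_iff.mpr hQ
  rw [infSeg_one Q hQ, List.getD_eq_getElem?_getD, List.getElem?_take_of_lt hi,
    ← List.getD_eq_getElem?_getD, listPow_getD Q hQ d₀ n i (by exact Nat.lt_of_lt_of_le hi (Nat.le_mul_of_pos_right n hlen))]


theorem hamDist_eq_countP [DecidableEq α] (d₀ : α) :
    ∀ S T : List α, S.length = T.length →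
      hamDist S T = (List.range S.length).countP fun i => decide (S.getD i d₀ ≠ T.getD i d₀) := by
  intro S
  induction S with
  | nil => intro T h; simp [hamDist]
  | cons a S ih =>
    intro T h
    cases T with
    | nil => simp at h
    | cons b T =>
      simp only [List.length_cons] at h
      have h' : S.length = T.length := by omega
      simp only [hamDist, List.zip_cons_cons, List.filter_cons, List.length_cons,
        List.range_succ_eq_map, List.countP_cons, List.countP_map]
      have htl := ih T h'
      simp only [hamDist] at htl
      by_cases hab : a = b <;>
        simp [hab, Function.comp_def] at htl ⊢ <;> omega

theorem countP_le_add (l : List ℕ) (r u v : ℕ → Bool)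
    (h : ∀ x ∈ l, r x → u x ∨ v x) :
    l.countP r ≤ l.countP u + l.countP v := by
  induction l with
  | nil => simp
  | cons a l ih =>
    have h' : ∀ x ∈ l, r x → u x ∨ v x := fun x hx => h x (List.mem_cons_of_mem a hx)
    have ha := h a List.mem_cons_self
    simp only [List.countP_cons]
    have hih := ih h'
    by_cases hr : r a <;> by_cases hu2 : u a <;> by_cases hv2 : v a <;>
      simp [hr, hu2, hv2] <;>
      first
      | omega
      | (exfalso; rcases ha hr with h1 | h1 <;> simp [h1] at hu2 hv2 <;> exact hu2 <;> exact hv2)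


theorem per_mul (f : ℕ → α) (p : ℕ) (hf : ∀ i, f (i + p) = f i) :
    ∀ t i, f (i + t * p) = f i := by
  intro t
  induction t with
  | zero => simp
  | succ s ih =>
    intro i
    have : i + (s + 1) * p = (i + s * p) + p := by ring
    rw [this, hf, ih]

theorem ofFn_eq_listPow (f : ℕ → α) (d : ℕ) (hd : 0 < d) (hf : ∀ i, f (i + d) = f i) :
    ∀ m, (List.ofFn fun i : Fin (m * d) => f ↑i) = listPow (List.ofFn fun i : Fin d => f ↑i) m := by
  intro m
  induction m with
  | zero => simp [listPow]
  | succ s ih =>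
    have hsplit : (s + 1) * d = d + s * d := by ring
    rw [listPow_succ, ← ih, List.ofFn_congr hsplit]
    simp only [Fin.coe_cast]
    rw [List.ofFn_add (f := fun i : Fin (d + s * d) => f ↑i)]
    congr 1
    apply congrArg
    funext i
    simp only [Fin.coe_natAdd]
    rw [Nat.add_comm d ↑i, hf]

-- reduce lemma
theorem per_reduce (f : ℕ → α) (p a : ℕ) (hp : 0 < p) (hf : ∀ i, f (i + p) = f i) (j s : ℕ) :
    f (j + s) = f (a + (j + a * p - a) % p + s) := by
  have hap : a ≤ a * p := Nat.le_mul_of_pos_right a hp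
  set J := j + a * p with hJ
  have hdm := Nat.div_add_mod (J - a) p
  have e1 : f (j + s) = f ((j + s) + a * p) := (per_mul f p hf a (j + s)).symm
  rw [Nat.mul_comm] at hdm
  have e2 : (j + s) + a * p = (a + (J - a) % p + s) + ((J - a) / p) * p := by omega
  rw [e1, e2, per_mul f p hf]

theorem main_core (p q a : ℕ) (hp : 0 < p) (hq : 0 < q) (f g : ℕ → α)
    (hf : ∀ i, f (i + p) = f i) (hg : ∀ i, g (i + q) = g i)
    (hagree : ∀ i, a ≤ i → i < a + (p + q) → f i = g i)
    (primf : PrimitiveStr (List.ofFn fun i : Fin p => f ↑i))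
    (primg : PrimitiveStr (List.ofFn fun i : Fin q => g ↑i)) :
    (List.ofFn fun i : Fin p => f ↑i) = (List.ofFn fun i : Fin q => g ↑i) := by
  set d := Nat.gcd p q with hdd
  have hd : 0 < d := Nat.gcd_pos_of_pos_left _ hp
  have hdp : d ≤ p := Nat.le_of_dvd hp (Nat.gcd_dvd_left _ _)
  have hdq : d ≤ q := Nat.le_of_dvd hq (Nat.gcd_dvd_right _ _)
  -- local window function
  have Hp : ∀ i, i + p < p + q → f (a + i) = f (a + i + p) := by
    intro i _
    rw [show a + i + p = (a + i) + p from rfl, hf]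
  have Hq : ∀ i, i + q < p + q → f (a + i) = f (a + i + q) := by
    intro i hi
    have e1 : f (a + i) = g (a + i) := hagree (a + i) (by omega) (by omega)
    have e2 : f (a + i + q) = g (a + i + q) := hagree (a + i + q) (by omega) (by omega)
    rw [e1, e2, show a + i + q = (a + i) + q from rfl, hg]
  have Hd : ∀ i, i + d < p + q → f (a + i) = f (a + i + d) := by
    have := fw p q (p + q) (fun i => f (a + i)) hp hq le_rfl
      (fun i hi => by simpa [Nat.add_assoc] using Hp i hi)
      (fun i hi => by simpa [Nat.add_assoc] using Hq i hi)
    intro i hi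
    simpa [Nat.add_assoc] using this i hi
  -- f is globally d-periodic
  have fd : ∀ j, f (j + d) = f j := by
    intro j
    have hr : (j + a * p - a) % p < p := Nat.mod_lt _ hp
    have e0 : f j = f (a + (j + a * p - a) % p) := by
      simpa using per_reduce f p a hp hf j 0
    have e1 : f (j + d) = f (a + (j + a * p - a) % p + d) := per_reduce f p a hp hf j d
    have e2 := Hd ((j + a * p - a) % p) (by omega)
    rw [e0, e1, ← e2]
  -- g is globally d-periodic
  have Hdg : ∀ i, i + d < p + q → g (a + i) = g (a + i + d) := by
    intro i hi
    have e1 : f (a + i) = g (a + i) := hagree (a + i) (by omega) (by omega)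
    have e2 : f (a + i + d) = g (a + i + d) := hagree (a + i + d) (by omega) (by omega)
    rw [← e1, ← e2]
    exact Hd i hi
  have gd : ∀ j, g (j + d) = g j := by
    intro j
    have hr : (j + a * q - a) % q < q := Nat.mod_lt _ hq
    have e0 : g j = g (a + (j + a * q - a) % q) := by
      simpa using per_reduce g q a hq hg j 0
    have e1 : g (j + d) = g (a + (j + a * q - a) % q + d) := per_reduce g q a hq hg j d
    have e2 := Hdg ((j + a * q - a) % q) (by omega)
    rw [e0, e1, ← e2]
  -- p = d
  have hpd : p = d := by
    obtain ⟨m, hm⟩ := Nat.gcd_dvd_left p q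
    have h1 : (List.ofFn fun i : Fin p => f ↑i) = listPow (List.ofFn fun i : Fin d => f ↑i) m := by
      rw [← ofFn_eq_listPow f d hd fd m]
      exact List.ofFn_congr (by rw [hm, Nat.mul_comm]) _
    have hm1 := primf.2 _ m h1
    subst hm1
    omega
  have hqd : q = d := by
    obtain ⟨m, hm⟩ := Nat.gcd_dvd_right p q
    have h1 : (List.ofFn fun i : Fin q => g ↑i) = listPow (List.ofFn fun i : Fin d => g ↑i) m := by
      rw [← ofFn_eq_listPow g d hd gd m]
      exact List.ofFn_congr (by rw [hm, Nat.mul_comm]) _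
    have hm1 := primg.2 _ m h1
    subst hm1
    omega
  have hpq : p = q := by omega
  subst hpq
  apply congrArg
  funext i
  have hi : (i : ℕ) < p := i.isLt
  have e0 : f ↑i = f (a + (↑i + a * p - a) % p) := by
    simpa using per_reduce f p a hp hf ↑i 0
  have e0g : g ↑i = g (a + (↑i + a * p - a) % p) := by
    simpa using per_reduce g p a hp hg ↑i 0
  have hr : (↑i + a * p - a) % p < p := Nat.mod_lt _ hp
  rw [e0, e0g]
  exact hagree _ (by omega) (by omega)

theorem countP_range_eq_card (n : ℕ) (P : ℕ → Prop) [DecidablePred P] :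
    (List.range n).countP (fun i => decide (P i)) = ((Finset.range n).filter P).card := by
  have h : ((Finset.range n).filter P).val = ((List.range n).filter fun i => decide (P i) : List ℕ) := by
    rw [Finset.filter_val, Finset.range_val]
    rfl
  rw [Finset.card, h, List.countP_eq_length_filter]
  rfl

/-- if `X` is a prefix of `Y`, `|Y| ≤ (5/2)|X|`, and `Q_X`, `Q_Y` are
primitive strings approximating `X` resp. `Y` with at most `k` mismatches and
lengths at most `|X|/(128k)` resp. `|Y|/(128k)`, then `Q_X = Q_Y`. -/
theorem Q_equality [DecidableEq α] (k : ℕ) (hk : 1 ≤ k) (X Y QX QY : List α)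
    (hpre : X <+: Y) (hXY : (Y.length : ℚ) ≤ 5 / 2 * (X.length : ℚ))
    (hQXprim : PrimitiveStr QX)
    (hQXhd : hamDist (infSeg QX 1 X.length) X ≤ k)
    (hQXlen : (QX.length : ℚ) ≤ (X.length : ℚ) / (128 * (k : ℚ)))
    (hQYprim : PrimitiveStr QY)
    (hQYhd : hamDist (infSeg QY 1 Y.length) Y ≤ k)
    (hQYlen : (QY.length : ℚ) ≤ (Y.length : ℚ) / (128 * (k : ℚ))) :
    QX = QY := by
  classical
  have hQXne := hQXprim.1
  have hQYne := hQYprim.1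
  set p := QX.length with hpdef
  set q := QY.length with hqdef
  have hp : 0 < p := List.length_pos_iff.mpr hQXne
  have hq : 0 < q := List.length_pos_iff.mpr hQYne
  set n := X.length with hndef
  set N := Y.length with hNdef
  have hnN : n ≤ N := hpre.length_le
  -- numeric facts
  have hk' : (1 : ℚ) ≤ (k : ℚ) := by exact_mod_cast hk
  have h128 : (0 : ℚ) < 128 * (k : ℚ) := by linarith
  have hn1 : (p : ℚ) * (128 * k) ≤ n := (le_div_iff₀ h128).mp hQXlen
  have hn2 : (q : ℚ) * (128 * k) ≤ N := (le_div_iff₀ h128).mp hQYlen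
  have hpQ : (1 : ℚ) ≤ (p : ℚ) := by exact_mod_cast hp
  have hqQ : (1 : ℚ) ≤ (q : ℚ) := by exact_mod_cast hq
  have hL : (2 * k + 1) * (p + q) ≤ n := by
    have hQ : ((2 * k + 1) * (p + q) : ℚ) ≤ (n : ℚ) := by
      nlinarith [hXY, hn1, hn2, hk', hpQ, hqQ,
        mul_nonneg (sub_nonneg.2 hk') (by linarith : (0:ℚ) ≤ (p:ℚ)),
        mul_nonneg (sub_nonneg.2 hk') (by linarith : (0:ℚ) ≤ (q:ℚ))]
    exact_mod_cast hQ
  set d₀ := QX.head hQXne with hd₀def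
  set f : ℕ → α := fun i => QX.getD (i % p) d₀ with hfdef
  set g : ℕ → α := fun i => QY.getD (i % q) d₀ with hgdef
  have hf : ∀ i, f (i + p) = f i := by
    intro i; simp only [hfdef]; rw [Nat.add_mod_right]
  have hg : ∀ i, g (i + q) = g i := by
    intro i; simp only [hgdef]; rw [Nat.add_mod_right]
  -- mismatch counts
  have cX : (List.range n).countP (fun i => decide (f i ≠ X.getD i d₀)) ≤ k := by
    have hlen : (infSeg QX 1 n).length = n := infSeg_length QX hQXne n
    have h1 := hamDist_eq_countP (α := α) d₀ (infSeg QX 1 n) X (by rw [hlen])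
    rw [hlen] at h1
    have h2 : ((List.range n).countP fun i => decide ((infSeg QX 1 n).getD i d₀ ≠ X.getD i d₀))
        = (List.range n).countP fun i => decide (f i ≠ X.getD i d₀) := by
      apply List.countP_congr
      intro i hi
      have hin : i < n := List.mem_range.mp hi
      rw [infSeg_getD QX hQXne d₀ n i hin]
    rw [h1, h2] at hQXhd
    exact hQXhd
  have cY : (List.range n).countP (fun i => decide (g i ≠ Y.getD i d₀)) ≤ k := by
    have hlen : (infSeg QY 1 N).length = N := infSeg_length QY hQYne N
    have h1 := hamDist_eq_countP (α := α) d₀ (infSeg QY 1 N) Y (by rw [hlen])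
    rw [hlen] at h1
    have h2 : ((List.range N).countP fun i => decide ((infSeg QY 1 N).getD i d₀ ≠ Y.getD i d₀))
        = (List.range N).countP fun i => decide (g i ≠ Y.getD i d₀) := by
      apply List.countP_congr
      intro i hi
      have hin : i < N := List.mem_range.mp hi
      rw [infSeg_getD QY hQYne d₀ N i hin]
    rw [h1, h2] at hQYhd
    exact le_trans (List.Sublist.countP_le (List.range_sublist.mpr hnN)) hQYhd
  have hXYgetD : ∀ i < n, X.getD i d₀ = Y.getD i d₀ := by
    obtain ⟨t, ht⟩ := hpre
    intro i hi
    rw [← ht, List.getD_append X t d₀ i hi]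
  have cD : (List.range n).countP (fun i => decide (f i ≠ g i)) ≤ 2 * k := by
    have hsub := countP_le_add (List.range n)
      (fun i => decide (f i ≠ g i))
      (fun i => decide (f i ≠ X.getD i d₀))
      (fun i => decide (g i ≠ Y.getD i d₀)) ?side
    · omega
    case side =>
      intro x hx hr
      have hxn : x < n := List.mem_range.mp hx
      simp only [decide_eq_true_eq] at hr ⊢
      by_contra hcc
      push_neg at hcc
      exact hr (by rw [hcc.1, hXYgetD x hxn, ← hcc.2])
  -- find a clean window
  set L := p + q with hLdef
  have hwin : ∃ a, a + L ≤ n ∧ ∀ i, a ≤ i → i < a + L → f i = g i := by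
    by_contra hcon
    push_neg at hcon
    have hex : ∀ j : ℕ, j < 2 * k + 1 → ∃ i, j * L ≤ i ∧ i < j * L + L ∧ f i ≠ g i := by
      intro j hj
      have h1 : (j + 1) * L ≤ (2 * k + 1) * L := Nat.mul_le_mul_right L (by omega)
      have h2 : j * L + L ≤ n := by
        have : (j + 1) * L = j * L + L := by ring
        omega
      obtain ⟨i, hi1, hi2, hi3⟩ := hcon (j * L) h2
      exact ⟨i, hi1, hi2, hi3⟩
    have cD' : ((Finset.range n).filter (fun i => f i ≠ g i)).card ≤ 2 * k := by
      rw [← countP_range_eq_card]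
      exact cD
    have hcard := Finset.card_le_card_of_injOn
      (f := fun j => if h : j < 2 * k + 1 then (hex j h).choose else 0)
      (s := Finset.range (2 * k + 1))
      (t := (Finset.range n).filter (fun i => f i ≠ g i)) ?maps ?injon
    · rw [Finset.card_range] at hcard
      omega
    case maps =>
      intro j hj
      have hj' : j < 2 * k + 1 := Finset.mem_range.mp hj
      obtain ⟨hc1, hc2, hc3⟩ := (hex j hj').choose_spec
      simp only [dif_pos hj']
      refine Finset.mem_filter.mpr ⟨Finset.mem_range.mpr ?_, hc3⟩
      have h1 : (j + 1) * L ≤ (2 * k + 1) * L := Nat.mul_le_mul_right L (by omega)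
      have : (j + 1) * L = j * L + L := by ring
      omega
    case injon =>
      intro j1 hj1 j2 hj2 heq
      have hj1' : j1 < 2 * k + 1 := Finset.mem_range.mp (Finset.mem_coe.mp hj1)
      have hj2' : j2 < 2 * k + 1 := Finset.mem_range.mp (Finset.mem_coe.mp hj2)
      obtain ⟨ha1, ha2, -⟩ := (hex j1 hj1').choose_spec
      obtain ⟨hb1, hb2, -⟩ := (hex j2 hj2').choose_spec
      simp only [dif_pos hj1', dif_pos hj2'] at heq
      have hLpos : 0 < L := by omega
      have e1 : (hex j1 hj1').choose / L = j1 :=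
        Nat.div_eq_of_lt_le ha1 (by rw [Nat.succ_mul]; omega)
      have e2 : (hex j2 hj2').choose / L = j2 :=
        Nat.div_eq_of_lt_le hb1 (by rw [Nat.succ_mul]; omega)
      rw [← e1, ← e2, heq]
  obtain ⟨a, haL, hagree⟩ := hwin
  -- identify QX and QY with ofFn of f and g
  have hQXofFn : QX = List.ofFn (fun i : Fin p => f ↑i) := by
    apply List.ext_getElem
    · simp [hpdef]
    · intro i h1 h2
      simp only [List.getElem_ofFn, hfdef]
      rw [Nat.mod_eq_of_lt (by simpa using h2), List.getD_eq_getElem]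
  have hQYofFn : QY = List.ofFn (fun i : Fin q => g ↑i) := by
    apply List.ext_getElem
    · simp [hqdef]
    · intro i h1 h2
      simp only [List.getElem_ofFn, hgdef]
      rw [Nat.mod_eq_of_lt (by simpa using h2), List.getD_eq_getElem]
  rw [hQXofFn, hQYofFn]
  exact main_core p q a hp hq f g hf hg
    (fun i hi1 hi2 => hagree i hi1 (by omega))
    (hQXofFn ▸ hQXprim) (hQYofFn ▸ hQYprim)
end

section
/- Let k ≥ 0 and m ≥ 1 be integers and let G_1, …, G_m be nonempty strings whose concatenation has total length n. Suppose there are integers t, t', r, r' with t + 1 = m − t' + 1 and strings X, Y such that X = G_1·G_2⋯G_t·(the prefix of G_{t+1} of length r) and Y = (the suffix of G_{t'} starting at position r')·G_{t'+1}⋯G_m, and suppose |X| + |Y| ≥ n − k. Then t' ≤ (m + k)/2 + 1 (equivalently, 2t' ≤ m + k + 2). -/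
variable {α : Type*}

/-- if `X` covers `G_1⋯G_t` plus a prefix of `G_{t+1}`, `Y` covers a suffix
of `G_{t'}` plus `G_{t'+1}⋯G_m`, with `t + 1 = m − t' + 1` and `|X| + |Y| ≥ n − k`
(where `n` is the total length of `G_1⋯G_m`, all `G_i` nonempty), then
`t' ≤ (m + k)/2 + 1`, i.e. `2t' ≤ m + k + 2`. -/
theorem t'_is_small (k m : ℕ) (G : ℕ → List α) (hm : 1 ≤ m)
    (hG : ∀ i, 1 ≤ i → i ≤ m → G i ≠ [])
    (n : ℕ) (hn : n = (((List.range' 1 m).map G).flatten).length)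
    (t t' r r' : ℕ) (ht'1 : 1 ≤ t') (ht'm : t' ≤ m)
    (htt : t + 1 = m - t' + 1)
    (hr : r ≤ (G (t + 1)).length) (hr'1 : 1 ≤ r') (hr'2 : r' ≤ (G t').length + 1)
    (X Y : List α)
    (hX : X = ((List.range' 1 t).map G).flatten ++ (G (t + 1)).take r)
    (hY : Y = (G t').drop (r' - 1) ++ ((List.range' (t' + 1) (m - t')).map G).flatten)
    (hlen : n - k ≤ X.length + Y.length) :
    2 * t' ≤ m + k + 2 := by
  by_cases hcase : 2 * t' ≤ m + 2
  · omega
  have htm : t + t' = m := by omega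
  set f : ℕ → ℕ := fun i => (G i).length with hf
  have hsum : ∀ a b : ℕ, (((List.range' a b).map G).flatten).length
      = ((List.range' a b).map f).sum := by
    intro a b
    rw [List.length_flatten, List.map_map]
    rfl
  have split : ∀ a b c : ℕ, ((List.range' a (b + c)).map f).sum
      = ((List.range' a b).map f).sum + ((List.range' (a + b) c).map f).sum := by
    intro a b c
    have h := List.range'_append (s := a) (m := b) (n := c) (step := 1)
    simp only [one_mul] at h
    rw [← h, List.map_append, List.sum_append]
  set g : ℕ := t' - t - 2 with hg
  have hg1 : 1 ≤ g := by omega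
  have e0 := split 1 (t + 1) (g + (m - t' + 1))
  rw [show (t + 1) + (g + (m - t' + 1)) = m by omega,
    show 1 + (t + 1) = t + 2 by omega] at e0
  have e2 := split (t + 2) g (m - t' + 1)
  rw [show (t + 2) + g = t' by omega] at e2
  have hn' : n = ((List.range' 1 (t + 1)).map f).sum
      + ((List.range' (t + 2) g).map f).sum
      + ((List.range' t' (m - t' + 1)).map f).sum := by
    rw [hn, hsum, e0, e2, add_assoc]
  have hXlen : X.length ≤ ((List.range' 1 (t + 1)).map f).sum := by
    have eX := split 1 t 1
    rw [show 1 + t = t + 1 by omega] at eX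
    rw [hX, List.length_append, hsum, eX]
    have h5 : ((List.range' (t + 1) 1).map f).sum = f (t + 1) := by
      simp [List.range'_one]
    have := List.length_take_le r (G (t + 1))
    simp only [hf] at h5 ⊢
    omega
  have hYlen : Y.length ≤ ((List.range' t' (m - t' + 1)).map f).sum := by
    have eY := split t' 1 (m - t')
    rw [show (1 : ℕ) + (m - t') = m - t' + 1 by omega] at eY
    rw [hY, List.length_append, hsum, eY]
    have h5 : ((List.range' t' 1).map f).sum = f t' := by
      simp [List.range'_one]
    have := List.length_drop (i := r' - 1) (l := G t')
    simp only [hf] at h5 ⊢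
    omega
  have hgap : g ≤ ((List.range' (t + 2) g).map f).sum := by
    have h6 := List.length_le_sum_of_one_le ((List.range' (t + 2) g).map f) ?_
    · simpa using h6
    · intro i hi
      simp only [List.mem_map] at hi
      obtain ⟨j, hj, rfl⟩ := hi
      rw [List.mem_range'_1] at hj
      have h7 : G j ≠ [] := hG j (by omega) (by omega)
      have h8 : 0 < (G j).length := List.length_pos_iff.mpr h7
      exact h8
  omega
end
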